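/- Let X be a subset of a real Hilbert space H with the induced topology, and σ > 0. The function x ↦ exp(-σ‖x-z‖²) on X belongs to C₀(X) for every z ∈ X if and only if every subset of X that is bounded (in the norm of H) and closed in X is compact. -/

import Mathlib

open Filter

/-- For `X ⊆ H` locally compact (induced topology) and `σ > 0`, all Gaussian
translates `x ↦ exp(-σ‖x-z‖²)`, `z ∈ X`, vanish at infinity on `X` if and only
if every bounded (in the norm of `H`) and closed subset of `X` is compact. -/
theorem gaussian_c0_iff_heine_borel {H : Type*} [NormedAddCommGroup H]
    [InnerProductSpace ℝ H] [CompleteSpace H] (X : Set H)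
    [LocallyCompactSpace X] (σ : ℝ) (hσ : 0 < σ) :
    (∀ z ∈ X, Tendsto (fun x : X => Real.exp (-σ * ‖(x : H) - z‖ ^ 2))
        (cocompact X) (nhds 0)) ↔
    (∀ s : Set X, Bornology.IsBounded ((↑) '' s : Set H) → IsClosed s →
        IsCompact s) := by
  constructor
  · intro h s hb hc
    rcases s.eq_empty_or_nonempty with rfl | ⟨z, hz⟩
    · exact isCompact_empty
    obtain ⟨r, hr⟩ := (Metric.isBounded_iff_subset_closedBall (z : H)).mp hb
    have hεpos : 0 < Real.exp (-σ * r ^ 2) := Real.exp_pos _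
    have hev := (h z z.2).eventually (eventually_lt_nhds hεpos)
    rw [Filter.hasBasis_cocompact.eventually_iff] at hev
    obtain ⟨K, hK, hKs⟩ := hev
    refine hK.of_isClosed_subset hc ?_
    intro x hx
    by_contra hxK
    have hlt := hKs hxK
    have hle : ‖(x : H) - z‖ ≤ r := by
      have := hr ⟨x, hx, rfl⟩
      simpa [Metric.mem_closedBall, dist_eq_norm] using this
    have hmono : Real.exp (-σ * r ^ 2) ≤ Real.exp (-σ * ‖(x : H) - z‖ ^ 2) := by
      apply Real.exp_le_exp.mpr
      have hsq : ‖(x : H) - z‖ ^ 2 ≤ r ^ 2 := by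
        nlinarith [norm_nonneg ((x : H) - z)]
      nlinarith
    linarith
  · intro h z hz
    rw [Metric.tendsto_nhds]
    intro ε hε
    set c : ℝ := (-Real.log ε) / σ with hc
    set R : ℝ := Real.sqrt (max c 0) + 1 with hRdef
    have hR0 : 0 < R := by positivity
    set K : Set X := {x : X | ‖(x : H) - z‖ ≤ R} with hKdef
    have hKc : IsClosed K := by
      have hcont : Continuous fun x : X => ‖(x : H) - z‖ := by continuity
      exact isClosed_le hcont continuous_const
    have hKb : Bornology.IsBounded ((↑) '' K : Set H) := by
      rw [Metric.isBounded_iff_subset_closedBall z]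
      refine ⟨R, ?_⟩
      rintro y ⟨x, hxK, rfl⟩
      simpa [hKdef, Metric.mem_closedBall, dist_eq_norm] using hxK
    have hKcomp := h K hKb hKc
    rw [Filter.hasBasis_cocompact.eventually_iff]
    refine ⟨K, hKcomp, ?_⟩
    intro x hx
    have hgt : R < ‖(x : H) - z‖ := by
      by_contra hle
      exact hx (le_of_not_gt hle)
    have hsq : c < ‖(x : H) - z‖ ^ 2 := by
      have h1 : Real.sqrt (max c 0) ^ 2 = max c 0 := Real.sq_sqrt (le_max_right c 0)
      have h2 : c ≤ max c 0 := le_max_left c 0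
      nlinarith [Real.sqrt_nonneg (max c 0), norm_nonneg ((x : H) - z)]
    have hval : Real.exp (-σ * ‖(x : H) - z‖ ^ 2) < ε := by
      have hlog : -σ * c = Real.log ε := by
        rw [hc]; field_simp
      calc Real.exp (-σ * ‖(x : H) - z‖ ^ 2) < Real.exp (-σ * c) := by
            apply Real.exp_lt_exp.mpr
            nlinarith
        _ = ε := by rw [hlog, Real.exp_log hε]
    have hpos : 0 < Real.exp (-σ * ‖(x : H) - z‖ ^ 2) := Real.exp_pos _
    simp only [Set.mem_setOf_eq, Real.dist_eq, sub_zero]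
    rw [abs_of_pos hpos]
    exact hval
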